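/- Let K be a field of characteristic zero and a1(x) ∈ K[x]. For the K-derivation D = y∂x + a1(x)y·∂y of K[x,y] (so D(x) = y, D(y) = a1(x)y), the image D(K[x,y]) equals the principal ideal (y) of K[x,y]; in particular, the image of D is a Mathieu-Zhao space of K[x,y]. -/
import Mathlib


/-- A `K`-subspace `M` of `R` is a *Mathieu-Zhao space* if whenever `a ∈ R`
satisfies `a ^ m ∈ M` for all sufficiently large `m`, then for every `b ∈ R`
one has `b * a ^ m ∈ M` for all sufficiently large `m`. -/
def Submodule.IsMathieuZhao {K R : Type*} [CommRing K] [CommRing R] [Algebra K R]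
    (M : Submodule K R) : Prop :=
  ∀ a : R, (∃ N : ℕ, ∀ m : ℕ, N ≤ m → a ^ m ∈ M) →
    ∀ b : R, ∃ N : ℕ, ∀ m : ℕ, N ≤ m → b * a ^ m ∈ M

theorem antideriv {K : Type*} [Field K] [CharZero K] (p : Polynomial K) :
    ∃ q : Polynomial K, Polynomial.derivative q = p := by
  refine ⟨p.sum fun n a => Polynomial.C (a / (n+1)) * Polynomial.X ^ (n+1), ?_⟩
  rw [Polynomial.sum, map_sum]
  conv_rhs => rw [← Polynomial.sum_C_mul_X_pow_eq p]
  rw [Polynomial.sum]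
  refine Finset.sum_congr rfl fun n _ => ?_
  rw [Polynomial.derivative_C_mul, Polynomial.derivative_X_pow]
  push_cast
  rw [← mul_assoc, ← Polynomial.C_mul,
    div_mul_cancel₀ _ (Nat.cast_add_one_ne_zero n)]

open MvPolynomial in
theorem key_mem {K : Type*} [Field K] [CharZero K] (a1 : Polynomial K)
    (D : Derivation K (MvPolynomial (Fin 2) K) (MvPolynomial (Fin 2) K))
    (hDx : D (MvPolynomial.X 0) = MvPolynomial.X 1)
    (hDy : D (MvPolynomial.X 1) =
      Polynomial.aeval (MvPolynomial.X 0) a1 * MvPolynomial.X 1) :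
    ∀ (j : ℕ) (p : Polynomial K),
      Polynomial.aeval (X 0 : MvPolynomial (Fin 2) K) p * (X 1) ^ (j + 1) ∈
        LinearMap.range D.toLinearMap := by
  intro j
  induction j with
  | zero =>
    intro p
    obtain ⟨q, hq⟩ := antideriv p
    refine ⟨Polynomial.aeval (X 0) q, ?_⟩
    simp [Derivation.map_aeval, hq, hDx, smul_eq_mul]
  | succ j ih =>
    intro p
    obtain ⟨q, hq⟩ := antideriv p
    have ht := ih ((j + 1 : ℕ) • (a1 * q))
    have hmem : D (Polynomial.aeval (X 0 : MvPolynomial (Fin 2) K) q * (X 1) ^ (j + 1)) ∈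
        LinearMap.range D.toLinearMap := ⟨_, rfl⟩
    have hsub := Submodule.sub_mem _ hmem ht
    have heq : D (Polynomial.aeval (X 0 : MvPolynomial (Fin 2) K) q * (X 1) ^ (j + 1)) -
        Polynomial.aeval (X 0 : MvPolynomial (Fin 2) K) ((j + 1 : ℕ) • (a1 * q)) * (X 1) ^ (j + 1)
        = Polynomial.aeval (X 0 : MvPolynomial (Fin 2) K) p * (X 1) ^ (j + 1 + 1) := by
      rw [Derivation.leibniz, Derivation.leibniz_pow, Derivation.map_aeval, hq, hDx, hDy]
      simp only [smul_eq_mul, map_nsmul, map_mul, Nat.add_sub_cancel, nsmul_eq_mul, map_add, map_one, map_natCast]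
      push_cast
      ring
    rw [← heq]
    exact hsub


open MvPolynomial in
theorem stmt_4 (K : Type*) [Field K] [CharZero K] (a1 : Polynomial K)
    (D : Derivation K (MvPolynomial (Fin 2) K) (MvPolynomial (Fin 2) K))
    (hDx : D (MvPolynomial.X 0) = MvPolynomial.X 1)
    (hDy : D (MvPolynomial.X 1) =
      Polynomial.aeval (MvPolynomial.X 0) a1 * MvPolynomial.X 1) :
    (LinearMap.range D.toLinearMap : Set (MvPolynomial (Fin 2) K)) =
      (Ideal.span {MvPolynomial.X 1} : Ideal (MvPolynomial (Fin 2) K)) ∧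
    (LinearMap.range D.toLinearMap).IsMathieuZhao := by
  have hmem : ∀ z : MvPolynomial (Fin 2) K,
      z ∈ LinearMap.range D.toLinearMap ↔ z ∈ Ideal.span {(X 1 : MvPolynomial (Fin 2) K)} := by
    intro z
    constructor
    · rintro ⟨f, rfl⟩
      show D f ∈ Ideal.span {(X 1 : MvPolynomial (Fin 2) K)}
      rw [Ideal.mem_span_singleton]
      induction f using MvPolynomial.induction_on with
      | C a => simp
      | add p q hp hq => rw [map_add]; exact dvd_add hp hq
      | mul_X p i hp =>
        rw [Derivation.leibniz, smul_eq_mul, smul_eq_mul]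
        refine dvd_add ?_ (Dvd.dvd.mul_left hp _)
        fin_cases i
        · rw [show ((⟨0, by norm_num⟩ : Fin 2)) = 0 from rfl, hDx]; exact ⟨p, mul_comm _ _⟩
        · rw [show ((⟨1, by norm_num⟩ : Fin 2)) = 1 from rfl, hDy]; exact ⟨p * Polynomial.aeval (X 0) a1, by ring⟩
    · intro hz
      rw [Ideal.mem_span_singleton] at hz
      obtain ⟨r, rfl⟩ := hz
      rw [show r = ∑ v ∈ r.support, monomial v (coeff v r) from (r.as_sum), Finset.mul_sum]
      refine Submodule.sum_mem _ fun v _ => ?_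
      have h := key_mem a1 D hDx hDy (v 1) (Polynomial.X ^ (v 0) : Polynomial K)
      simp only [map_pow, Polynomial.aeval_X] at h
      have heq : (X 1 : MvPolynomial (Fin 2) K) * monomial v (coeff v r)
          = (coeff v r) • ((X 0 : MvPolynomial (Fin 2) K) ^ (v 0) * (X 1) ^ (v 1 + 1)) := by
        rw [monomial_eq, Finsupp.prod_pow, Fin.prod_univ_two, smul_eq_C_mul]
        ring
      rw [heq]
      exact Submodule.smul_mem _ _ h
  refine ⟨Set.ext fun z => by simpa using hmem z, ?_⟩
  rintro a ⟨N, hN⟩ b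
  refine ⟨N, fun m hm => ?_⟩
  rw [hmem]
  exact Ideal.mul_mem_left _ b ((hmem _).1 (hN m hm))
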